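/- Let c ≥ 2 and let (λ, μ) be a codimension-c decoration with k = ∑μⱼ and parts λ₁ ≥ … ≥ λ_b. Let p = (c-2)k + 1 - λ₁ - … - λ_c be the value of p for the smallest minimal link. Then 0 ≤ λ_c + p < μ₁. -/

import Mathlib

/-- Sort a list of integers in non-increasing order. -/
def rsort (l : List ℤ) : List ℤ := List.insertionSort (· ≥ ·) l

/-- Remove all non-positive parts (trailing zeros) from a partition. -/
def strip (l : List ℤ) : List ℤ := l.filter (fun x => 0 < x)

/-- The smallest minimal link of a codimension-`c` pair of partitions `(λ, μ)`:
choose the `c` largest parts of `λ` (padding with zeros if needed), shift them by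
`p = (c-2)k + 1 - (λ₁ + ⋯ + λ_c)` where `k = ∑ μⱼ`, merge with `μ` and re-sort;
the other partition becomes `(λ_{c+1}, …, λ_b)`. -/
def smlink (c : ℕ) (P : List ℤ × List ℤ) : List ℤ × List ℤ :=
  let p : ℤ := ((c : ℤ) - 2) * P.2.sum + 1 - (P.1.take c).sum
  (strip (rsort ((P.1.take c ++ List.replicate (c - P.1.length) 0).map (· + p) ++ P.2)),
   strip (P.1.drop c))

/-- The smallest minimal link of `P` produces nonnegative parts, i.e. `λ_c + p ≥ 0`. -/
def ValidLink (c : ℕ) (P : List ℤ × List ℤ) : Prop :=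
  0 ≤ P.1.getD (c - 1) 0 + (((c : ℤ) - 2) * P.2.sum + 1 - (P.1.take c).sum)

/-- A partition: a non-increasing list of positive integers. -/
def IsPartition (l : List ℤ) : Prop := l.Pairwise (· ≥ ·) ∧ ∀ x ∈ l, 0 < x

/-- A codimension-`c` decoration: a pair of partitions reachable to the complete
intersection pair `((1^c), (1))` by finitely many smallest minimal links, all of
whose intermediate links are valid (have nonnegative parts). -/
def IsDecoration (c : ℕ) (P : List ℤ × List ℤ) : Prop :=
  IsPartition P.1 ∧ IsPartition P.2 ∧
  ∃ n : ℕ, (∀ m < n, ValidLink c ((smlink c)^[m] P)) ∧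
    (smlink c)^[n] P = (List.replicate c 1, [1])

/-! ### Auxiliary lemmas -/

lemma strip_eq_self {l : List ℤ} (h : ∀ x ∈ l, 0 < x) : strip l = l :=
  List.filter_eq_self.2 (by simpa using h)

lemma sum_strip {l : List ℤ} (h : ∀ x ∈ l, 0 ≤ x) : (strip l).sum = l.sum := by
  induction l with
  | nil => rfl
  | cons a l ih =>
    have ha := h a (by simp)
    have ih' := ih (fun x hx => h x (by simp [hx]))
    rcases lt_or_eq_of_le ha with ha' | ha'
    · simp only [strip, List.filter_cons, decide_eq_true_eq, if_pos ha', List.sum_cons]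
      rw [show List.filter (fun x => decide (0 < x)) l = strip l from rfl, ih']
    · simp only [strip, List.filter_cons, decide_eq_true_eq, if_neg (by omega : ¬ (0:ℤ) < a),
        List.sum_cons, ← ha', zero_add]
      exact ih'

lemma mem_strip {l : List ℤ} {x : ℤ} (h : x ∈ strip l) : 0 < x := by
  have := List.of_mem_filter h
  simpa using this

lemma rsort_sorted (l : List ℤ) : (rsort l).Pairwise (· ≥ ·) :=
  List.pairwise_insertionSort _ l

lemma rsort_perm (l : List ℤ) : (rsort l).Perm l :=
  List.perm_insertionSort _ l

lemma sum_rsort (l : List ℤ) : (rsort l).sum = l.sum := (rsort_perm l).sum_eq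

lemma mem_rsort {l : List ℤ} {x : ℤ} : x ∈ rsort l ↔ x ∈ l := (rsort_perm l).mem_iff

lemma sum_map_add (l : List ℤ) (p : ℤ) : (l.map (· + p)).sum = l.sum + l.length * p := by
  induction l with
  | nil => simp
  | cons a l ih => simp [ih]; push_cast; ring

/-- Every element of the padded leading block dominates `λ_c` (with default 0). -/
lemma getD_le_mem_pad {c : ℕ} (hc : 1 ≤ c) {l : List ℤ} (hs : l.Pairwise (· ≥ ·))
    (hpos : ∀ x ∈ l, 0 < x) {x : ℤ}
    (hx : x ∈ l.take c ++ List.replicate (c - l.length) 0) :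
    l.getD (c - 1) 0 ≤ x := by
  rcases List.mem_append.1 hx with hx | hx
  · obtain ⟨i, hi, rfl⟩ := List.getElem_of_mem hx
    have hi' : i < l.length := by simp at hi; omega
    have hic : i < c := by simp at hi; omega
    rw [List.getElem_take]
    by_cases hcl : c - 1 < l.length
    · rw [List.getD_eq_getElem _ _ hcl]
      have := hs.rel_get_of_le (a := ⟨i, hi'⟩) (b := ⟨c - 1, hcl⟩)
        (by simp [Fin.le_def]; omega)
      simpa [List.get_eq_getElem] using this
    · rw [List.getD_eq_default _ _ (by omega)]
      exact le_of_lt (hpos _ (List.getElem_mem hi'))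
  · have hx0 : x = 0 := List.eq_of_mem_replicate hx
    have hne : c - l.length ≠ 0 := by
      intro h0; rw [h0] at hx; simp at hx
    rw [List.getD_eq_default _ _ (by omega), hx0]

/-- The padded leading block is sorted. -/
lemma pad_sorted {c : ℕ} {l : List ℤ} (hs : l.Pairwise (· ≥ ·)) (hpos : ∀ x ∈ l, 0 < x) :
    (l.take c ++ List.replicate (c - l.length) 0).Pairwise (· ≥ ·) := by
  rw [List.pairwise_append]
  refine ⟨hs.sublist (List.take_sublist c l),
    (List.pairwise_replicate).2 (Or.inr le_rfl), ?_⟩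
  intro x hx y hy
  have hy0 : y = 0 := List.eq_of_mem_replicate hy
  have := hpos x (List.mem_of_mem_take hx)
  omega

lemma pad_length {c : ℕ} (l : List ℤ) :
    (l.take c ++ List.replicate (c - l.length) 0).length = c ∨
    (l.take c ++ List.replicate (c - l.length) 0).length = l.length := by
  simp only [List.length_append, List.length_take, List.length_replicate]
  omega

lemma pad_length_of_le {c : ℕ} {l : List ℤ} :
    (l.take c ++ List.replicate (c - l.length) 0).length = max c (min c l.length) := by
  simp only [List.length_append, List.length_take, List.length_replicate]
  omega

lemma pad_sum {c : ℕ} (l : List ℤ) :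
    (l.take c ++ List.replicate (c - l.length) 0).sum = (l.take c).sum := by
  simp

/-- Sums of the two components of the smallest minimal link. -/
lemma smlink_sum {c : ℕ} (hc : 2 ≤ c) {Q : List ℤ × List ℤ}
    (h1 : IsPartition Q.1) (h2 : IsPartition Q.2) (hv : ValidLink c Q) :
    (smlink c Q).1.sum =
      (Q.1.take c).sum + c * (((c : ℤ) - 2) * Q.2.sum + 1 - (Q.1.take c).sum) + Q.2.sum ∧
    (smlink c Q).2.sum = Q.1.sum - (Q.1.take c).sum := by
  set p : ℤ := ((c : ℤ) - 2) * Q.2.sum + 1 - (Q.1.take c).sum with hp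
  set pad := Q.1.take c ++ List.replicate (c - Q.1.length) 0 with hpad
  have hpadlen : pad.length = c := by
    simp only [hpad, List.length_append, List.length_take, List.length_replicate]
    by_cases h : c ≤ Q.1.length
    · omega
    · omega
  constructor
  · show (strip (rsort (pad.map (· + p) ++ Q.2))).sum = _
    have hnn : ∀ x ∈ rsort (pad.map (· + p) ++ Q.2), 0 ≤ x := by
      intro x hx
      rw [mem_rsort] at hx
      rcases List.mem_append.1 hx with hx | hx
      · obtain ⟨y, hy, rfl⟩ := List.mem_map.1 hx
        have := getD_le_mem_pad (by omega) h1.1 h1.2 hy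
        have hv' := hv
        unfold ValidLink at hv'
        omega
      · exact le_of_lt (h2.2 x hx)
    rw [sum_strip hnn, sum_rsort, List.sum_append, sum_map_add, pad_sum, hpadlen]
  · show (strip (Q.1.drop c)).sum = _
    rw [strip_eq_self (fun x hx => h1.2 x (List.mem_of_mem_drop hx))]
    have := List.sum_take_add_sum_drop Q.1 c
    omega

/-- The invariant `∑λ = (c-1)∑μ + 1`. -/
def SumInv (c : ℕ) (Q : List ℤ × List ℤ) : Prop :=
  Q.1.sum = ((c : ℤ) - 1) * Q.2.sum + 1

lemma inv_back {c : ℕ} (hc : 2 ≤ c) {Q : List ℤ × List ℤ}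
    (h1 : IsPartition Q.1) (h2 : IsPartition Q.2) (hv : ValidLink c Q)
    (h : SumInv c (smlink c Q)) : SumInv c Q := by
  obtain ⟨e1, e2⟩ := smlink_sum hc h1 h2 hv
  unfold SumInv at h ⊢
  rw [e1, e2] at h
  have hC : (2 : ℤ) ≤ (c : ℤ) := by exact_mod_cast hc
  have key : ((c : ℤ) - 1) * (Q.1.sum - (((c : ℤ) - 1) * Q.2.sum + 1)) = 0 := by
    linear_combination -h
  rcases mul_eq_zero.1 key with h' | h'
  · exfalso; omega
  · linarith

/-- `smlink` always produces a pair of partitions (given the first component is sorted). -/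
lemma smlink_partition (c : ℕ) (Q : List ℤ × List ℤ) (h1 : Q.1.Pairwise (· ≥ ·)) :
    IsPartition (smlink c Q).1 ∧ IsPartition (smlink c Q).2 := by
  constructor
  · exact ⟨(rsort_sorted _).filter _, fun x hx => mem_strip hx⟩
  · exact ⟨(h1.sublist (List.drop_sublist c Q.1)).filter _, fun x hx => mem_strip hx⟩

lemma iter_partition (c : ℕ) (P : List ℤ × List ℤ)
    (h1 : IsPartition P.1) (h2 : IsPartition P.2) (m : ℕ) :
    IsPartition ((smlink c)^[m] P).1 ∧ IsPartition ((smlink c)^[m] P).2 := by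
  induction m with
  | zero => exact ⟨h1, h2⟩
  | succ m ih =>
    rw [Function.iterate_succ_apply']
    exact smlink_partition c _ ih.1.1

lemma inv_of_decoration {c : ℕ} (hc : 2 ≤ c) {P : List ℤ × List ℤ}
    (h : IsDecoration c P) : SumInv c P := by
  obtain ⟨h1, h2, n, hvalid, hn⟩ := h
  have key : ∀ j, j ≤ n → SumInv c ((smlink c)^[n - j] P) := by
    intro j
    induction j with
    | zero =>
      intro _
      simp only [Nat.sub_zero, hn, SumInv, List.sum_replicate, List.sum_cons, List.sum_nil]
      push_cast; ring
    | succ j ih =>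
      intro hj
      have hj' : j ≤ n := by omega
      have hInv := ih hj'
      have hrw : n - j = (n - (j + 1)) + 1 := by omega
      rw [hrw, Function.iterate_succ_apply'] at hInv
      have hpart := iter_partition c P h1 h2 (n - (j + 1))
      exact inv_back hc hpart.1 hpart.2 (hvalid _ (by omega)) hInv
  have := key n le_rfl
  simpa using this

/-- A positive partition with sum 1 is `[1]`. -/
lemma partition_sum_one {l : List ℤ} (h : IsPartition l) (hs : l.sum = 1) : l = [1] := by
  have hlen : ∀ m : List ℤ, (∀ x ∈ m, 0 < x) → (m.length : ℤ) ≤ m.sum := by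
    intro m
    induction m with
    | nil => simp
    | cons a t ih =>
      intro hm
      have ha := hm a (by simp)
      have := ih (fun x hx => hm x (by simp [hx]))
      simp only [List.length_cons, List.sum_cons]
      push_cast
      omega
  cases l with
  | nil => simp at hs
  | cons a t =>
    have ha := h.2 a (by simp)
    have ht : ∀ x ∈ t, 0 < x := fun x hx => h.2 x (by simp [hx])
    have h1 := hlen t ht
    simp only [List.sum_cons] at hs
    have htsum : t.sum ≤ 0 := by omega
    have htlen : t.length = 0 := by
      by_contra hne
      have : (1 : ℤ) ≤ t.length := by
        have : 1 ≤ t.length := Nat.one_le_iff_ne_zero.2 hne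
        exact_mod_cast this
      omega
    have : t = [] := List.length_eq_zero_iff.1 htlen
    subst this
    simp at hs
    rw [hs]

/-- `([1], [])` is a fixed point of `smlink`. -/
lemma smlink_fix_single {c : ℕ} (hc : 1 ≤ c) : smlink c ([(1 : ℤ)], []) = ([1], []) := by
  have htake : ([(1 : ℤ)]).take c = [1] := List.take_of_length_le (by simpa using hc)
  have hdrop : ([(1 : ℤ)]).drop c = [] := List.drop_eq_nil_of_le (by simpa using hc)
  have hsorted : ([(1 : ℤ)] ++ List.replicate (c - 1) 0).Pairwise (· ≥ ·) := by
    rw [List.pairwise_append]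
    refine ⟨by simp, (List.pairwise_replicate).2 (Or.inr le_rfl), ?_⟩
    intro x hx y hy
    simp at hx hy
    omega
  unfold smlink
  simp only [htake, hdrop, List.sum_nil, List.sum_cons, List.length_cons, List.length_nil,
    List.append_nil, mul_zero, zero_add, add_zero, sub_self]
  rw [Prod.mk.injEq]
  refine ⟨?_, rfl⟩
  rw [show (List.map (fun x : ℤ => x) ([1] ++ List.replicate (c - 1) 0)) =
      [(1 : ℤ)] ++ List.replicate (c - 1) 0 by simp]
  rw [show rsort ([(1 : ℤ)] ++ List.replicate (c - 1) 0) =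
      [(1 : ℤ)] ++ List.replicate (c - 1) 0 from hsorted.insertionSort_eq]
  unfold strip
  simp

/-- `smlink` of the complete intersection pair. -/
lemma smlink_CI {c : ℕ} (hc : 2 ≤ c) :
    smlink c (List.replicate c (1 : ℤ), [1]) = ([1], []) := by
  unfold smlink
  have hlen : (List.replicate c (1 : ℤ)).length = c := List.length_replicate
  have htake : (List.replicate c (1 : ℤ)).take c = List.replicate c 1 :=
    List.take_of_length_le (by omega)
  have hdrop : (List.replicate c (1 : ℤ)).drop c = [] :=
    List.drop_eq_nil_of_le (by omega)
  rw [htake, hdrop, hlen]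
  simp only [List.sum_cons, List.sum_nil, add_zero, mul_one, Nat.sub_self,
    List.replicate_zero, List.append_nil, List.sum_replicate, nsmul_eq_mul, mul_one]
  have hp : ((c : ℤ) - 2) + 1 - (c : ℤ) = -1 := by ring
  rw [hp]
  have hmap : (List.replicate c (1 : ℤ)).map (· + (-1)) = List.replicate c 0 := by
    rw [List.map_replicate]; norm_num
  rw [hmap, Prod.mk.injEq]
  constructor
  · -- strip (rsort (replicate c 0 ++ [1])) = [1]
    have hperm : (strip (rsort (List.replicate c (0 : ℤ) ++ [1]))).Perm
        (strip (List.replicate c (0 : ℤ) ++ [1])) :=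
      (rsort_perm _).filter _
    have hstrip : strip (List.replicate c (0 : ℤ) ++ [1]) = [1] := by
      unfold strip
      rw [List.filter_append]
      simp
    rw [hstrip] at hperm
    exact List.perm_singleton.mp hperm
  · unfold strip; simp

/-- The key involution: if `λ_c + p ≥ μ₁` then `smlink (smlink P) = P`. -/
lemma smlink_involution {c : ℕ} (hc : 2 ≤ c) {P : List ℤ × List ℤ}
    (h1 : IsPartition P.1) (h2 : IsPartition P.2) (hinv : SumInv c P) (hne : P.2 ≠ [])
    (hge : P.2.getD 0 0 ≤ P.1.getD (c - 1) 0 +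
      (((c : ℤ) - 2) * P.2.sum + 1 - (P.1.take c).sum)) :
    smlink c (smlink c P) = P := by
  obtain ⟨l, μ⟩ := P
  simp only at h1 h2 hinv hne hge ⊢
  set p : ℤ := ((c : ℤ) - 2) * μ.sum + 1 - (l.take c).sum with hp
  set pad := l.take c ++ List.replicate (c - l.length) 0 with hpaddef
  set A := pad.map (· + p) with hA
  -- basic facts about μ
  obtain ⟨m, μ', rfl⟩ : ∃ m μ', μ = m :: μ' := by
    cases μ with
    | nil => exact absurd rfl hne
    | cons m μ' => exact ⟨m, μ', rfl⟩
  have hμ1pos : 0 < m := h2.2 m (by simp)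
  have hμub : ∀ y ∈ m :: μ', y ≤ m := by
    intro y hy
    rcases List.mem_cons.1 hy with rfl | hy
    · exact le_rfl
    · exact List.rel_of_pairwise_cons h2.1 hy
  have hμgetD : (m :: μ').getD 0 0 = m := rfl
  rw [hμgetD] at hge
  -- facts about A
  have hAlb : ∀ x ∈ A, m ≤ x := by
    intro x hx
    obtain ⟨y, hy, rfl⟩ := List.mem_map.1 hx
    have := getD_le_mem_pad (by omega) h1.1 h1.2 hy
    omega
  have hApos : ∀ x ∈ A, 0 < x := fun x hx => lt_of_lt_of_le hμ1pos (hAlb x hx)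
  have hAsorted : A.Pairwise (· ≥ ·) := by
    refine List.Pairwise.map _ ?_ (pad_sorted h1.1 h1.2)
    intro a b hab
    simpa using by omega
  have hAlen : A.length = c := by
    simp only [hA, List.length_map, hpaddef, List.length_append, List.length_take,
      List.length_replicate]
    omega
  -- first application of smlink
  have hsorted1 : (A ++ m :: μ').Pairwise (· ≥ ·) := by
    rw [List.pairwise_append]
    exact ⟨hAsorted, h2.1, fun x hx y hy => le_trans (hμub y hy) (hAlb x hx)⟩
  have hpos1 : ∀ x ∈ A ++ m :: μ', 0 < x := by
    intro x hx
    rcases List.mem_append.1 hx with hx | hx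
    · exact hApos x hx
    · exact h2.2 x hx
  have step1 : smlink c (l, m :: μ') = (A ++ m :: μ', l.drop c) := by
    unfold smlink
    simp only
    rw [Prod.mk.injEq]
    constructor
    · rw [show rsort (A ++ m :: μ') = A ++ m :: μ' from hsorted1.insertionSort_eq]
      exact strip_eq_self hpos1
    · exact strip_eq_self (fun x hx => h1.2 x (List.mem_of_mem_drop hx))
  rw [step1]
  -- second application
  unfold smlink
  simp only
  have htake2 : (A ++ m :: μ').take c = A := by
    rw [← hAlen]; exact List.take_left
  have hdrop2 : (A ++ m :: μ').drop c = m :: μ' := by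
    rw [← hAlen]; exact List.drop_left
  have hlen2 : c - (A ++ m :: μ').length = 0 := by
    simp only [List.length_append, hAlen, List.length_cons]
    omega
  rw [htake2, hdrop2, hlen2]
  simp only [List.replicate_zero, List.append_nil]
  -- the new shift is -p
  have hAsum : A.sum = (l.take c).sum + (c : ℤ) * p := by
    rw [hA, sum_map_add, pad_sum]
    have : (pad.length : ℤ) = (c : ℤ) := by
      have : pad.length = c := by
        simp only [hpaddef, List.length_append, List.length_take, List.length_replicate]
        omega
      exact_mod_cast this
    rw [this]
  have hdropsum : (l.drop c).sum = l.sum - (l.take c).sum := by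
    have := List.sum_take_add_sum_drop l c
    omega
  have hinv' : l.sum = ((c : ℤ) - 1) * (m :: μ').sum + 1 := hinv
  have hp2 : ((c : ℤ) - 2) * (l.drop c).sum + 1 - A.sum = -p := by
    rw [hdropsum, hAsum, hinv', hp]
    ring
  rw [hp2]
  have hmapback : A.map (· + (-p)) = pad := by
    rw [hA, List.map_map]
    have : ((fun x => x + (-p)) ∘ (fun x => x + p)) = id := by
      funext y; simp
    rw [this, List.map_id]
  rw [hmapback]
  -- now strip (rsort (pad ++ l.drop c)) = l
  rw [Prod.mk.injEq]
  constructor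
  · by_cases hcl : c ≤ l.length
    · have hpad' : pad = l.take c := by
        rw [hpaddef, show c - l.length = 0 by omega]
        simp
      rw [hpad', List.take_append_drop]
      rw [show rsort l = l from h1.1.insertionSort_eq]
      exact strip_eq_self h1.2
    · push_neg at hcl
      have hdropnil : l.drop c = [] := List.drop_eq_nil_of_le (by omega)
      have htakeall : l.take c = l := List.take_of_length_le (by omega)
      rw [hdropnil, List.append_nil, hpaddef, htakeall]
      have hsorted' : (l ++ List.replicate (c - l.length) 0).Pairwise (· ≥ ·) := by
        rw [List.pairwise_append]
        refine ⟨h1.1, (List.pairwise_replicate).2 (Or.inr le_rfl), ?_⟩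
        intro x hx y hy
        have := h1.2 x hx
        have hy0 : y = 0 := List.eq_of_mem_replicate hy
        omega
      rw [show rsort (l ++ List.replicate (c - l.length) 0) =
          l ++ List.replicate (c - l.length) 0 from hsorted'.insertionSort_eq]
      unfold strip
      rw [List.filter_append]
      have : l.filter (fun x => decide (0 < x)) = l := by
        rw [List.filter_eq_self]
        intro a ha
        simpa using h1.2 a ha
      rw [this]
      simp
  · exact strip_eq_self h2.2

/-- For a codimension-`c` decoration `(λ, μ)` with `k = ∑μⱼ` and
`p = (c-2)k + 1 - λ₁ - ⋯ - λ_c` the shift of the smallest minimal link,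
one has `0 ≤ λ_c + p < μ₁`. -/
theorem stmt5 (c : ℕ) (hc : 2 ≤ c) (P : List ℤ × List ℤ) (k p : ℤ)
    (hk : P.2.sum = k) (h : IsDecoration c P)
    (hp : p = ((c : ℤ) - 2) * k + 1 - (P.1.take c).sum) :
    0 ≤ P.1.getD (c - 1) 0 + p ∧ P.1.getD (c - 1) 0 + p < P.2.getD 0 0 := by
  subst hk hp
  have hinv := inv_of_decoration hc h
  obtain ⟨h1, h2, n, hvalid, hn⟩ := h
  -- helper: values at the CI pair
  have hCI_getD : (List.replicate c (1 : ℤ)).getD (c - 1) 0 = 1 := by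
    rw [List.getD_eq_getElem _ _ (by simp; omega)]
    simp
  have hCI_take : ((List.replicate c (1 : ℤ)).take c).sum = (c : ℤ) := by
    rw [List.take_of_length_le (by simp)]
    simp [List.sum_replicate]
  constructor
  · -- nonnegativity
    rcases Nat.eq_zero_or_pos n with rfl | hnpos
    · simp only [Function.iterate_zero, id] at hn
      rw [hn] at *
      simp only [hCI_getD, hCI_take, List.sum_cons, List.sum_nil, add_zero, mul_one]
      linarith
    · have := hvalid 0 hnpos
      simp only [Function.iterate_zero, id] at this
      exact this
  · -- strict upper bound
    by_contra hcon
    push_neg at hcon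
    -- μ is nonempty
    have hμne : P.2 ≠ [] := by
      intro hμ
      have hsum1 : P.1.sum = 1 := by
        have := hinv
        unfold SumInv at this
        rw [hμ] at this
        simpa using this
      have hP1 : P.1 = [1] := partition_sum_one h1 hsum1
      have hPeq : P = ([1], []) := by
        obtain ⟨a, b⟩ := P
        simp only at hP1 hμ
        rw [hP1, hμ]
      have hfix : (smlink c)^[n] P = ([1], []) := by
        rw [hPeq]
        exact Function.iterate_fixed (smlink_fix_single (by omega)) n
      rw [hn] at hfix
      have := congrArg (fun q => q.1.length) hfix
      simp at this
      omega
    have hinvol := smlink_involution hc h1 h2 hinv hμne hcon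
    have h2m : ∀ m : ℕ, (smlink c)^[2 * m] P = P := by
      intro m
      induction m with
      | zero => rfl
      | succ m ih =>
        rw [show 2 * (m + 1) = 2 + 2 * m by ring, Function.iterate_add_apply, ih]
        simpa [Function.iterate_succ, Function.comp] using hinvol
    rcases Nat.even_or_odd n with ⟨m, hm⟩ | ⟨m, hm⟩
    · -- n even : P is the CI pair, contradiction with hcon
      rw [hm, show m + m = 2 * m by ring, h2m m] at hn
      rw [hn] at hcon
      simp only [hCI_getD, hCI_take] at hcon
      simp only [List.sum_cons, List.sum_nil, add_zero, mul_one] at hcon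
      have : ((1 : ℤ) :: []).getD 0 0 = 1 := rfl
      rw [this] at hcon
      omega
    · -- n odd : smlink P = CI, so P = smlink CI = ([1], []), contradiction
      rw [hm, show 2 * m + 1 = 1 + 2 * m by ring, Function.iterate_add_apply, h2m m] at hn
      simp only [Function.iterate_one] at hn
      have hP : P = smlink c (smlink c P) := hinvol.symm
      rw [hn, smlink_CI hc] at hP
      have : P.2 = [] := by rw [hP]
      exact hμne this
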